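/- Let q ≥ 3 and n ≥ 1 be integers, δ a real number with 2e/q² ≤ δ ≤ 1, and t a natural number with t/n ≤ δ/2 + 1/(2n) and t ≤ n/4. Then h(t/n)·log_q(2) + (t/n)·log_q(1 - q^{-2}) - 1/n ≤ δ, where h is the binary entropy function (h(0)=0). -/

import Mathlib

open Real

noncomputable def binEnt (y : ℝ) : ℝ := -(y * Real.logb 2 y) - (1 - y) * Real.logb 2 (1 - y)

lemma aux_mono {a b : ℝ} (ha : 0 < a) (hab : a ≤ b) (hb1 : b ≤ 1) :
    a - a * Real.log a ≤ b - b * Real.log b := by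
  have hb : 0 < b := lt_of_lt_of_le ha hab
  have h1 : Real.log (b / a) ≤ b / a - 1 := Real.log_le_sub_one_of_pos (by positivity)
  rw [Real.log_div hb.ne' ha.ne'] at h1
  have h1' : a * (Real.log b - Real.log a) ≤ b - a := by
    have h := mul_le_mul_of_nonneg_left h1 ha.le
    have heq : a * (b / a - 1) = b - a := by field_simp
    linarith [h, heq.le]
  have h2 : Real.log b ≤ 0 := Real.log_nonpos hb.le hb1
  nlinarith [mul_nonneg (sub_nonneg.2 hab) (neg_nonneg.2 h2)]

theorem stmt_5 (q n : ℤ) (hq : 3 ≤ q) (hn : 1 ≤ n) (δ : ℝ)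
    (hδ1 : 2 * Real.exp 1 / (q : ℝ) ^ 2 ≤ δ) (hδ2 : δ ≤ 1)
    (t : ℕ) (ht : (t : ℝ) / n ≤ δ / 2 + 1 / (2 * n)) (ht' : (t : ℝ) ≤ n / 4) :
    binEnt ((t : ℝ) / n) * Real.logb q 2 + ((t : ℝ) / n) * Real.logb q (1 - (q : ℝ)⁻¹ ^ 2)
      - 1 / n ≤ δ := by
  have hnR : (1 : ℝ) ≤ (n : ℝ) := by exact_mod_cast hn
  have hn0 : (0 : ℝ) < (n : ℝ) := by linarith
  have hqR : (3 : ℝ) ≤ (q : ℝ) := by exact_mod_cast hq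
  have hq1 : (1 : ℝ) < (q : ℝ) := by linarith
  have hlogq : 0 < Real.log q := Real.log_pos hq1
  have hq2 : (0 : ℝ) < (q : ℝ) ^ 2 := by positivity
  have hδpos : 0 < δ := lt_of_lt_of_le (by positivity) hδ1
  -- the second term is nonpositive
  have hterm2 : ((t : ℝ) / n) * Real.logb q (1 - (q : ℝ)⁻¹ ^ 2) ≤ 0 := by
    apply mul_nonpos_of_nonneg_of_nonpos
    · positivity
    · apply Real.logb_nonpos hq1
      · have : (q : ℝ)⁻¹ ^ 2 ≤ 1 := by
          rw [inv_pow, inv_le_one_iff₀]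
          right; nlinarith
        linarith
      · have : (0:ℝ) ≤ (q : ℝ)⁻¹ ^ 2 := by positivity
        linarith
  rcases Nat.eq_zero_or_pos t with ht0 | htpos
  · -- t = 0 case
    have hbe : binEnt ((t : ℝ) / n) = 0 := by simp [binEnt, ht0]
    rw [hbe, ht0]
    simp only [zero_mul, Nat.cast_zero, zero_div, zero_add]
    have : (0:ℝ) < 1 / n := by positivity
    linarith
  · have hx0 : 0 < (t : ℝ) / n := by
      apply div_pos _ hn0
      exact_mod_cast htpos
    have hx14 : (t : ℝ) / n ≤ 1/4 := by
      rw [div_le_iff₀ hn0]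
      linarith
    have hhalf : 1/(2*(n:ℝ)) ≤ 1/2 := by
      rw [div_le_div_iff₀ (by linarith) (by norm_num)]
      linarith
    have hhalf0 : (0:ℝ) < 1/(2*(n:ℝ)) := by positivity
    have hs1 : δ/2 + 1/(2*(n:ℝ)) ≤ 1 := by linarith
    have hs0 : (0:ℝ) < δ/2 + 1/(2*(n:ℝ)) := by linarith
    set x : ℝ := (t : ℝ) / n with hxdef
    clear_value x
    have hlog2 : (0:ℝ) < Real.log 2 := Real.log_pos (by norm_num)
    have h1x : 0 < 1 - x := by linarith
    have key : binEnt x * Real.logb q 2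
        = (-(x * Real.log x) - (1-x) * Real.log (1-x)) / Real.log q := by
      simp only [binEnt, Real.logb]
      field_simp
    -- bound -(1-x) log(1-x) ≤ x
    have e0 : -((1-x) * Real.log (1-x)) ≤ x := by
      have h := Real.log_le_sub_one_of_pos (show (0:ℝ) < (1-x)⁻¹ by positivity)
      rw [Real.log_inv] at h
      have h' := mul_le_mul_of_nonneg_left h h1x.le
      have heq : (1-x) * ((1-x)⁻¹ - 1) = x := by field_simp; ring
      nlinarith
    have e1 : -(x * Real.log x) - (1-x) * Real.log (1-x) ≤ x - x * Real.log x := by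
      linarith
    have e2 : x - x * Real.log x
        ≤ (δ/2 + 1/(2*(n:ℝ))) - (δ/2 + 1/(2*(n:ℝ))) * Real.log (δ/2 + 1/(2*(n:ℝ))) :=
      aux_mono hx0 ht hs1
    -- log s ≥ 1 - 2 log q
    have e3 : 1 - 2 * Real.log q ≤ Real.log (δ/2 + 1/(2*(n:ℝ))) := by
      have hlq : Real.log (Real.exp 1 / (q:ℝ)^2) = 1 - 2 * Real.log q := by
        rw [Real.log_div (Real.exp_pos 1).ne' hq2.ne', Real.log_exp, Real.log_pow]
        push_cast; ring
      have hle : Real.exp 1 / (q:ℝ)^2 ≤ δ/2 + 1/(2*(n:ℝ)) := by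
        have : Real.exp 1 / (q:ℝ)^2 ≤ δ/2 := by
          rw [div_le_iff₀ hq2] at hδ1 ⊢
          linarith
        linarith
      calc 1 - 2 * Real.log q = Real.log (Real.exp 1 / (q:ℝ)^2) := hlq.symm
        _ ≤ _ := Real.log_le_log (by positivity) hle
    have e4 : (δ/2 + 1/(2*(n:ℝ))) - (δ/2 + 1/(2*(n:ℝ))) * Real.log (δ/2 + 1/(2*(n:ℝ)))
        ≤ 2 * (δ/2 + 1/(2*(n:ℝ))) * Real.log q := by
      have h := mul_le_mul_of_nonneg_left e3 hs0.le
      nlinarith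
    have e5 : (-(x * Real.log x) - (1-x) * Real.log (1-x)) / Real.log q
        ≤ 2 * (δ/2 + 1/(2*(n:ℝ))) := by
      rw [div_le_iff₀ hlogq]
      have hexp : 2 * (δ/2 + 1/(2*(n:ℝ))) * Real.log q
          = 2 * (δ/2 + 1/(2*(n:ℝ))) * Real.log q := rfl
      linarith [e1, e2, e4]
    have hfinal : 2 * (δ/2 + 1/(2*(n:ℝ))) = δ + 1/n := by
      field_simp
    rw [key]
    clear e0 e1 e2 e3 e4 hδ1 ht' hx14 key
    have h1n : (0:ℝ) < 1/(n:ℝ) := by positivity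
    linarith [e5, hterm2, hfinal.le, hfinal.ge]
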